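/- Let G be a locally compact topological group and let E be a barrelled locally convex topological ℂ-vector space in which every bounded subset is relatively compact (a Montel space), endowed with an injective ℂ-linear map ι : E → (X → ℂ) into the functions on a set X such that each evaluation map f ↦ ι(f)(x) is continuous on E (the topology of E is stronger than pointwise convergence). Let T : G → (E →L E) be a linear representation (T(e) = id and T(ab) = T(a) ∘ T(b), each T(a) a continuous linear operator). Assume: (1) for every f ∈ E there is a compact neighborhood K of the identity e in G such that the set { T(a) f : a ∈ K } is bounded in E; (2) for every f ∈ E and x ∈ X, ι(T(a) f)(x) → ι(f)(x) as a → e. Then the representation is continuous, i.e. the map G × E → E, (a, f) ↦ T(a) f, is jointly continuous. (Appendix, Lemma 1.) -/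

import Mathlib

open Filter Topology Set Uniformity

theorem aux_equicont {ι : Type*}
    {E : Type*} [AddCommGroup E] [Module ℝ E] [Module ℂ E] [IsScalarTower ℝ ℂ E]
    [TopologicalSpace E] [IsTopologicalAddGroup E] [ContinuousSMul ℂ E]
    [LocallyConvexSpace ℝ E] [BarrelledSpace ℝ E]
    (F : ι → E →L[ℝ] E)
    (hb : ∀ x : E, Bornology.IsVonNBounded ℂ (Set.range fun i => F i x)) :
    ∀ U ∈ 𝓝 (0 : E), ∀ᶠ g in 𝓝 (0 : E), ∀ i, F i g ∈ U := by
  haveI : ContinuousSMul ℝ E := by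
    constructor
    have : (fun p : ℝ × E => p.1 • p.2) = fun p : ℝ × E => ((p.1 : ℂ)) • p.2 := by
      funext p
      rw [← IsScalarTower.algebraMap_smul ℂ p.1 p.2]
      rfl
    rw [this]
    exact ((Complex.continuous_ofReal.comp continuous_fst).smul continuous_snd)
  letI : UniformSpace E := IsTopologicalAddGroup.rightUniformSpace E
  haveI : IsUniformAddGroup E := isUniformAddGroup_of_addCommGroup
  have hq : WithSeminorms (gaugeSeminormFamily ℝ E) := with_gaugeSeminormFamily
  have H : ∀ k x, BddAbove (Set.range fun i => gaugeSeminormFamily ℝ E k (F i x)) := by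
    intro k x
    have hbR : Bornology.IsVonNBounded ℝ (Set.range fun i => F i x) :=
      (hb x).restrict_scalars ℝ
    obtain ⟨r, -, hr⟩ :=
      (hq.isVonNBounded_iff_seminorm_bounded (s := Set.range fun i => F i x)).mp hbR k
    exact ⟨r, by rintro y ⟨i, rfl⟩; exact (hr _ ⟨i, rfl⟩).le⟩
  have hec := (hq.banach_steinhaus (𝓕 := F) H).equicontinuous
  intro U hU
  have hU' : {p : E × E | p.2 - p.1 ∈ U} ∈ 𝓤 E := by
    rw [uniformity_eq_comap_nhds_zero]
    exact preimage_mem_comap hU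
  filter_upwards [hec 0 _ hU'] with g hg i
  simpa using hg i




/-!
STATEMENT 6 (Appendix, Lemma 1).
Let `G` be a locally compact topological group and `E` a Montel space (a
barrelled locally convex space in which every bounded set is relatively
compact) of functions on a set `X`, whose topology is stronger than that of
pointwise convergence. Let `T : G →* (E →L E)` be a linear representation such
that (1) for every `f ∈ E` there is a compact neighborhood `K` of the identity
with `{T a f : a ∈ K}` bounded in `E`, and (2) `ι (T a f) x → ι f x` as
`a → 1` for all `x`. Then the representation is jointly continuous.
-/

theorem montel_representation_continuous
    {G : Type*} [Group G] [TopologicalSpace G] [IsTopologicalGroup G]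
    [LocallyCompactSpace G]
    {E : Type*} [AddCommGroup E] [Module ℝ E] [Module ℂ E] [IsScalarTower ℝ ℂ E]
    [TopologicalSpace E] [IsTopologicalAddGroup E] [ContinuousSMul ℂ E]
    [LocallyConvexSpace ℝ E] [BarrelledSpace ℝ E]
    -- every bounded subset of E is relatively compact (Montel property)
    (hMontel : ∀ S : Set E, Bornology.IsVonNBounded ℂ S → IsCompact (closure S))
    -- E is a space of functions on X, with topology stronger than pointwise convergence
    {X : Type*} (ι : E →ₗ[ℂ] (X → ℂ)) (hι : Function.Injective ι)
    (hev : ∀ x : X, Continuous fun f : E => ι f x)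
    -- a linear representation of G by continuous linear operators on E
    (T : G →* (E →L[ℂ] E))
    -- (1): boundedness of the orbit of each f over a compact neighborhood of 1
    (h1 : ∀ f : E, ∃ K : Set G, K ∈ nhds (1 : G) ∧ IsCompact K ∧
      Bornology.IsVonNBounded ℂ ((fun a => T a f) '' K))
    -- (2): pointwise convergence T a f → f as a → 1
    (h2 : ∀ (f : E) (x : X),
      Filter.Tendsto (fun a : G => ι (T a f) x) (nhds 1) (nhds (ι f x))) :
    Continuous fun p : G × E => T p.1 p.2 := by
  classical
  have hιc : Continuous fun f : E => ι f := continuous_pi fun x => hev x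
  -- Step A: tendsto at 1
  have tendsto1 : ∀ f : E, Tendsto (fun a => T a f) (𝓝 1) (𝓝 f) := by
    intro f
    obtain ⟨K, hKn, hKc, hKb⟩ := h1 f
    set C : Set E := closure ((fun a => T a f) '' K) with hC
    have hCc : IsCompact C := hMontel _ hKb
    have hmem : ∀ᶠ a in 𝓝 (1 : G), T a f ∈ C :=
      mem_of_superset hKn fun a ha => subset_closure ⟨a, ha, rfl⟩
    -- f ∈ C
    have hιC : IsClosed ((fun g : E => ι g) '' C) :=
      (hCc.image hιc).isClosed
    have hfC : f ∈ C := by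
      have hlim : Tendsto (fun a : G => ι (T a f)) (𝓝 1) (𝓝 (ι f)) :=
        tendsto_pi_nhds.mpr (h2 f)
      have : ι f ∈ (fun g : E => ι g) '' C :=
        hιC.mem_of_tendsto hlim (hmem.mono fun a ha => ⟨_, ha, rfl⟩)
      obtain ⟨g, hgC, hg⟩ := this
      rwa [hι hg] at hgC
    haveI : CompactSpace C := isCompact_iff_compactSpace.mp hCc
    have hemb : IsEmbedding fun c : C => ι (c : E) :=
      ((hιc.comp continuous_subtype_val).isClosedEmbedding
        fun c d h => Subtype.ext (hι h)).isEmbedding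
    set u : G → C := fun a => if h : T a f ∈ C then ⟨T a f, h⟩ else ⟨f, hfC⟩ with hu
    have huval : ∀ᶠ a in 𝓝 (1 : G), (u a : E) = T a f := by
      filter_upwards [hmem] with a ha
      simp [hu, ha]
    have hut : Tendsto u (𝓝 1) (𝓝 (⟨f, hfC⟩ : C)) := by
      rw [hemb.tendsto_nhds_iff]
      refine Tendsto.congr' ?_ (tendsto_pi_nhds.mpr (h2 f))
      filter_upwards [huval] with a ha
      simp [Function.comp, ha]
    have := (continuous_subtype_val.tendsto _).comp hut
    exact this.congr' huval
  -- Step A': continuity of a ↦ T a f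
  have contA : ∀ f : E, Continuous fun a : G => T a f := by
    intro f
    rw [continuous_iff_continuousAt]
    intro a₀
    have h₁ : Tendsto (fun a : G => a₀⁻¹ * a) (𝓝 a₀) (𝓝 1) := by
      have := (continuous_const.mul continuous_id).tendsto a₀ (f := fun a : G => a₀⁻¹ * a)
      simpa using this
    have h₂ := ((T a₀).continuous.tendsto f).comp ((tendsto1 f).comp h₁)
    refine h₂.congr fun a => ?_
    show T a₀ (T (a₀⁻¹ * a) f) = T a f
    rw [← ContinuousLinearMap.comp_apply, ← ContinuousLinearMap.mul_def, ← map_mul,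
      mul_inv_cancel_left]
  -- Step B/C: joint continuity
  rw [continuous_iff_continuousAt]
  rintro ⟨a₀, f₀⟩
  obtain ⟨Q, hQc, hQn⟩ := exists_compact_mem_nhds a₀
  have key : ∀ U ∈ 𝓝 (0 : E), ∀ᶠ g in 𝓝 (0 : E), ∀ a : Q, T a g ∈ U := by
    refine aux_equicont (fun a : Q => (T a).restrictScalars ℝ) ?_
    intro x
    have hcpt : IsCompact ((fun a => T a x) '' Q) := hQc.image (contA x)
    have hb : Bornology.IsVonNBounded ℂ ((fun a => T a x) '' Q) := by
      letI : UniformSpace E := IsTopologicalAddGroup.rightUniformSpace E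
      haveI : IsUniformAddGroup E := isUniformAddGroup_of_addCommGroup
      exact hcpt.totallyBounded.isVonNBounded ℂ
    refine hb.subset ?_
    rintro - ⟨a, rfl⟩
    exact ⟨a, a.2, rfl⟩
  have t1 : Tendsto (fun p : G × E => T p.1 f₀) (𝓝 (a₀, f₀)) (𝓝 (T a₀ f₀)) :=
    ((contA f₀).comp continuous_fst).tendsto (a₀, f₀)
  have t2 : Tendsto (fun p : G × E => T p.1 (p.2 - f₀)) (𝓝 (a₀, f₀)) (𝓝 0) := by
    rw [tendsto_def]
    intro U hU
    obtain ⟨V, hV, hV'⟩ := (key U hU).exists_mem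
    have e1 : ∀ᶠ p : G × E in 𝓝 (a₀, f₀), p.1 ∈ Q :=
      (continuous_fst.tendsto (a₀, f₀)).eventually_mem hQn
    have e2 : ∀ᶠ p : G × E in 𝓝 (a₀, f₀), p.2 - f₀ ∈ V := by
      have hsub : Tendsto (fun p : G × E => p.2 - f₀) (𝓝 (a₀, f₀)) (𝓝 0) := by
        have := ((continuous_snd.sub continuous_const).tendsto (a₀, f₀)
          : Tendsto (fun p : G × E => p.2 - f₀) _ _)
        convert this using 2 <;> simp
      exact hsub.eventually_mem hV
    filter_upwards [e1, e2] with p hp1 hp2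
    exact hV' _ hp2 ⟨p.1, hp1⟩
  have := t2.add t1
  rw [zero_add] at this
  refine this.congr fun p => ?_
  simp [map_sub]
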